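/- arXiv:2412.05304 — 2 statements merged into one kernel-verified Lean document; each statement's English description precedes it below -/
import Mathlib

section
/- For a pointed topological space (X, x₀), group inversion inv : π₁^wh(X, x₀) → π₁^wh(X, x₀), [ζ] ↦ [ζ⁻], is continuous if and only if π₁^wh(X, x₀) is a topological group (i.e., if and only if group multiplication ([ζ],[η]) ↦ [ζ·η] is jointly continuous and inversion is continuous). -/
open Set TopologicalSpace

attribute [local instance] Path.Homotopic.setoid

universe u v

variable {X : Type u} [TopologicalSpace X]

/-- The basic whisker-topology set `B([ζ],U)`: all classes of the form `[ζ·η]`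
where `η` is a loop based at `x₀` with image in `U`. -/
def whiskerB {x₀ : X} (ζ : Path.Homotopic.Quotient x₀ x₀) (U : Set X) :
    Set (Path.Homotopic.Quotient x₀ x₀) :=
  {g | ∃ η : Path x₀ x₀, Set.range η ⊆ U ∧ g = Path.Homotopic.Quotient.trans ζ ⟦η⟧}

/-- The whisker topology on `π₁(X, x₀)`, generated by the basic sets `B([ζ],U)`
for `U` an open neighborhood of `x₀`. -/
def whiskerTopology (x₀ : X) : TopologicalSpace (Path.Homotopic.Quotient x₀ x₀) :=
  TopologicalSpace.generateFrom
    {S | ∃ (ζ : Path.Homotopic.Quotient x₀ x₀) (U : Set X),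
      IsOpen U ∧ x₀ ∈ U ∧ S = whiskerB ζ U}

/-- Inversion `[ζ] ↦ [ζ⁻]` on `π₁(X, x₀)`. -/
def whiskerInv {x₀ : X} : Path.Homotopic.Quotient x₀ x₀ → Path.Homotopic.Quotient x₀ x₀ :=
  Quotient.map Path.symm (fun _ _ h => Nonempty.map Path.Homotopy.symm₂ h)

/-- `π₁^wh(X, x₀)` is a topological group: the multiplication `([ζ],[η]) ↦ [ζ·η]`
is jointly continuous and inversion `[ζ] ↦ [ζ⁻]` is continuous, with respect to
the whisker topology. -/
def IsWhiskerTopGroup (x₀ : X) : Prop :=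
  letI := whiskerTopology x₀
  Continuous (fun p : Path.Homotopic.Quotient x₀ x₀ × Path.Homotopic.Quotient x₀ x₀ =>
    Path.Homotopic.Quotient.trans p.1 p.2) ∧
  Continuous (whiskerInv (x₀ := x₀))

theorem Path.Homotopic.comp_lift {x₀ x₁ x₂ : X} (P₀ : Path x₀ x₁) (P₁ : Path x₁ x₂) :
    (⟦P₀.trans P₁⟧ : Path.Homotopic.Quotient x₀ x₂) =
      Path.Homotopic.Quotient.trans ⟦P₀⟧ ⟦P₁⟧ :=
  rfl

namespace WhiskerAux

open scoped Topology

variable {x₀ : X}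

lemma comp_assoc (a b c : Path.Homotopic.Quotient x₀ x₀) :
    (a.trans b).trans c = a.trans (b.trans c) := by
  induction a using Quotient.inductionOn
  induction b using Quotient.inductionOn
  induction c using Quotient.inductionOn
  rw [← Path.Homotopic.comp_lift, ← Path.Homotopic.comp_lift, ← Path.Homotopic.comp_lift,
    ← Path.Homotopic.comp_lift]
  exact Quotient.sound ⟨Path.Homotopy.transAssoc _ _ _⟩

lemma comp_refl (a : Path.Homotopic.Quotient x₀ x₀) :
    a.trans ⟦Path.refl x₀⟧ = a := by
  induction a using Quotient.inductionOn
  rw [← Path.Homotopic.comp_lift]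
  exact Quotient.sound ⟨Path.Homotopy.transRefl _⟩

lemma inv_inv (a : Path.Homotopic.Quotient x₀ x₀) : whiskerInv (whiskerInv a) = a := by
  induction a using Quotient.inductionOn
  show Quotient.map _ _ (Quotient.map _ _ _) = _
  exact congrArg (Quotient.mk _) (Path.symm_symm _)

lemma inv_mk (p : Path x₀ x₀) :
    whiskerInv (⟦p⟧ : Path.Homotopic.Quotient x₀ x₀) = ⟦p.symm⟧ :=
  Quotient.map_mk _ _ _

lemma inv_comp (a b : Path.Homotopic.Quotient x₀ x₀) :
    whiskerInv (a.trans b) = (whiskerInv b).trans (whiskerInv a) := by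
  induction a using Quotient.inductionOn with | h p =>
  induction b using Quotient.inductionOn with | h q =>
  rw [← Path.Homotopic.comp_lift, inv_mk, inv_mk, inv_mk, ← Path.Homotopic.comp_lift,
    Path.trans_symm]

lemma mem_self {U : Set X} (hU : x₀ ∈ U) (g : Path.Homotopic.Quotient x₀ x₀) :
    g ∈ whiskerB g U :=
  ⟨Path.refl x₀, by rw [Path.refl_range]; exact Set.singleton_subset_iff.2 hU,
    (comp_refl g).symm⟩

lemma whiskerB_mono {U V : Set X} (h : U ⊆ V) (g : Path.Homotopic.Quotient x₀ x₀) :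
    whiskerB g U ⊆ whiskerB g V :=
  fun _ ⟨η, hη, he⟩ => ⟨η, hη.trans h, he⟩

lemma whiskerB_nested {ζ g : Path.Homotopic.Quotient x₀ x₀} {U : Set X}
    (hg : g ∈ whiskerB ζ U) : whiskerB g U ⊆ whiskerB ζ U := by
  obtain ⟨η, hη, rfl⟩ := hg
  rintro _ ⟨μ, hμ, rfl⟩
  exact ⟨η.trans μ, by rw [Path.trans_range]; exact Set.union_subset hη hμ,
    by erw [Path.Homotopic.comp_lift, ← comp_assoc]⟩

lemma isOpen_basic (ζ : Path.Homotopic.Quotient x₀ x₀) {U : Set X} (hU : IsOpen U)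
    (hx : x₀ ∈ U) : @IsOpen _ (whiskerTopology x₀) (whiskerB ζ U) :=
  TopologicalSpace.GenerateOpen.basic _ ⟨ζ, U, hU, hx, rfl⟩

lemma exists_basic {T : Set (Path.Homotopic.Quotient x₀ x₀)}
    (hT : @IsOpen _ (whiskerTopology x₀) T) :
    ∀ g ∈ T, ∃ U, IsOpen U ∧ x₀ ∈ U ∧ whiskerB g U ⊆ T := by
  induction hT with
  | basic S hS =>
    rintro g hg
    obtain ⟨ζ, U, hU, hx, rfl⟩ := hS
    exact ⟨U, hU, hx, whiskerB_nested hg⟩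
  | univ => exact fun g _ => ⟨Set.univ, isOpen_univ, Set.mem_univ _, Set.subset_univ _⟩
  | inter S T _ _ ihS ihT =>
    intro g hg
    obtain ⟨U, hU, hxU, hsU⟩ := ihS g hg.1
    obtain ⟨V, hV, hxV, hsV⟩ := ihT g hg.2
    exact ⟨U ∩ V, hU.inter hV, ⟨hxU, hxV⟩,
      Set.subset_inter ((whiskerB_mono Set.inter_subset_left g).trans hsU)
        ((whiskerB_mono Set.inter_subset_right g).trans hsV)⟩
  | sUnion S _ ih =>
    rintro g ⟨T, hT, hgT⟩
    obtain ⟨U, hU, hx, hs⟩ := ih T hT g hgT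
    exact ⟨U, hU, hx, hs.trans (Set.subset_sUnion_of_mem hT)⟩

lemma conj (hinv : @Continuous _ _ (whiskerTopology x₀) (whiskerTopology x₀)
      (whiskerInv (x₀ := x₀)))
    (b : Path.Homotopic.Quotient x₀ x₀) {U : Set X} (hU : IsOpen U) (hx : x₀ ∈ U) :
    ∃ V, IsOpen V ∧ x₀ ∈ V ∧ ∀ μ : Path x₀ x₀, Set.range μ ⊆ V →
      ∃ ν : Path x₀ x₀, Set.range ν ⊆ U ∧
        Path.Homotopic.Quotient.trans ⟦μ⟧ b = b.trans ⟦ν⟧ := by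
  have hopen : @IsOpen _ (whiskerTopology x₀) (whiskerInv ⁻¹' whiskerB b U) :=
    @Continuous.isOpen_preimage _ _ (whiskerTopology x₀) (whiskerTopology x₀) _ hinv _
      (isOpen_basic b hU hx)
  have hc : whiskerInv b ∈ whiskerInv ⁻¹' whiskerB b U := by
    show whiskerInv (whiskerInv b) ∈ whiskerB b U
    rw [inv_inv]
    exact mem_self hx b
  obtain ⟨V, hV, hxV, hsub⟩ := exists_basic hopen _ hc
  refine ⟨V, hV, hxV, fun μ hμ => ?_⟩
  have hmem : (whiskerInv b).trans ⟦μ.symm⟧ ∈ whiskerB (whiskerInv b) V :=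
    ⟨μ.symm, by rwa [Path.symm_range], rfl⟩
  have h2 := hsub hmem
  erw [Set.mem_preimage, inv_comp, inv_inv, inv_mk, Path.symm_symm] at h2
  exact h2

end WhiskerAux

/-- Group inversion `[ζ] ↦ [ζ⁻]` on `π₁^wh(X, x₀)` is continuous if and only if
`π₁^wh(X, x₀)` is a topological group (multiplication jointly continuous and
inversion continuous). -/
theorem whisker_inv_continuous_iff_topGroup (x₀ : X) :
    (@Continuous _ _ (whiskerTopology x₀) (whiskerTopology x₀) (whiskerInv (x₀ := x₀))) ↔
    IsWhiskerTopGroup x₀ := by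
  refine ⟨fun hinv => ⟨?_, hinv⟩, fun h => h.2⟩
  letI := whiskerTopology x₀
  refine continuous_generateFrom_iff.2 ?_
  rintro S ⟨ζ, U, hU, hxU, rfl⟩
  rw [isOpen_prod_iff]
  intro a b hab
  obtain ⟨V, hV, hxV, hconj⟩ := WhiskerAux.conj hinv b hU hxU
  refine ⟨whiskerB a V, whiskerB b U, WhiskerAux.isOpen_basic a hV hxV,
    WhiskerAux.isOpen_basic b hU hxU, WhiskerAux.mem_self hxV a, WhiskerAux.mem_self hxU b, ?_⟩
  rintro ⟨a', b'⟩ ⟨⟨μ, hμ, rfl⟩, ⟨ν', hν', rfl⟩⟩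
  obtain ⟨ν, hν, hcomm⟩ := hconj μ hμ
  have key : (a.trans ⟦μ⟧).trans (b.trans ⟦ν'⟧)
      = (a.trans b).trans (⟦ν.trans ν'⟧ : Path.Homotopic.Quotient x₀ x₀) := by
    rw [Path.Homotopic.comp_lift, WhiskerAux.comp_assoc a (⟦μ⟧ : Path.Homotopic.Quotient x₀ x₀)
        (b.trans ⟦ν'⟧),
      ← WhiskerAux.comp_assoc (⟦μ⟧ : Path.Homotopic.Quotient x₀ x₀) b ⟦ν'⟧, hcomm,
      WhiskerAux.comp_assoc b (⟦ν⟧ : Path.Homotopic.Quotient x₀ x₀) ⟦ν'⟧,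
      ← WhiskerAux.comp_assoc a b _]
  show (a.trans ⟦μ⟧).trans (b.trans ⟦ν'⟧) ∈ whiskerB ζ U
  rw [key]
  exact WhiskerAux.whiskerB_nested hab
    ⟨ν.trans ν', by rw [Path.trans_range]; exact Set.union_subset hν hν', rfl⟩
end

section
/- For a pointed topological space (X, x₀), the space π₁^wh(X, x₀) is discrete if and only if X is semilocally simply connected at x₀, i.e., there exists an open neighborhood U of x₀ such that every loop based at x₀ with image in U is null-homotopic in X. -/
open Set TopologicalSpace

attribute [local instance] Path.Homotopic.setoid

universe u v

variable {X : Type u} [TopologicalSpace X]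

lemma whisker_comp_refl {x₀ : X} (g : Path.Homotopic.Quotient x₀ x₀) :
    Path.Homotopic.Quotient.trans g ⟦Path.refl x₀⟧ = g := by
  obtain ⟨γ, rfl⟩ := g.exists_rep
  show (⟦γ.trans (Path.refl x₀)⟧ : Path.Homotopic.Quotient x₀ x₀) = ⟦γ⟧
  exact Quotient.sound ⟨Path.Homotopy.transRefl γ⟩

lemma whisker_comp_assoc {x₀ : X} (g : Path.Homotopic.Quotient x₀ x₀) (η η' : Path x₀ x₀) :
    Path.Homotopic.Quotient.trans (Path.Homotopic.Quotient.trans g ⟦η⟧) ⟦η'⟧ =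
      Path.Homotopic.Quotient.trans g ⟦η.trans η'⟧ := by
  obtain ⟨γ, rfl⟩ := g.exists_rep
  show (⟦(γ.trans η).trans η'⟧ : Path.Homotopic.Quotient x₀ x₀) = ⟦γ.trans (η.trans η')⟧
  exact Quotient.sound ⟨Path.Homotopy.transAssoc γ η η'⟩

lemma self_mem_whiskerB {x₀ : X} (g : Path.Homotopic.Quotient x₀ x₀) {U : Set X}
    (hU : x₀ ∈ U) : g ∈ whiskerB g U :=
  ⟨Path.refl x₀, by simp [range_subset_iff, hU], (whisker_comp_refl g).symm⟩

lemma whiskerB_subset {x₀ : X} {ζ g : Path.Homotopic.Quotient x₀ x₀} {U V : Set X}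
    (hg : g ∈ whiskerB ζ U) (hVU : V ⊆ U) : whiskerB g V ⊆ whiskerB ζ U := by
  obtain ⟨η, hη, rfl⟩ := hg
  rintro _ ⟨η', hη', rfl⟩
  exact ⟨η.trans η', by rw [Path.trans_range]; exact union_subset hη (hη'.trans hVU),
    whisker_comp_assoc ζ η η'⟩

lemma whisker_exists_basic {x₀ : X} {s : Set (Path.Homotopic.Quotient x₀ x₀)}
    (hs : TopologicalSpace.GenerateOpen
      {S | ∃ (ζ : Path.Homotopic.Quotient x₀ x₀) (U : Set X),
        IsOpen U ∧ x₀ ∈ U ∧ S = whiskerB ζ U} s)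
    {g : Path.Homotopic.Quotient x₀ x₀} (hg : g ∈ s) :
    ∃ U : Set X, IsOpen U ∧ x₀ ∈ U ∧ whiskerB g U ⊆ s := by
  induction hs with
  | basic t ht =>
    obtain ⟨ζ, U, hUo, hUx, rfl⟩ := ht
    exact ⟨U, hUo, hUx, whiskerB_subset hg subset_rfl⟩
  | univ => exact ⟨univ, isOpen_univ, mem_univ _, subset_univ _⟩
  | inter t₁ t₂ _ _ ih₁ ih₂ =>
    obtain ⟨U₁, hU₁o, hU₁x, hU₁⟩ := ih₁ hg.1
    obtain ⟨U₂, hU₂o, hU₂x, hU₂⟩ := ih₂ hg.2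
    refine ⟨U₁ ∩ U₂, hU₁o.inter hU₂o, ⟨hU₁x, hU₂x⟩, subset_inter ?_ ?_⟩
    · exact (whiskerB_subset (self_mem_whiskerB g hU₁x) inter_subset_left).trans hU₁
    · exact (whiskerB_subset (self_mem_whiskerB g hU₂x) inter_subset_right).trans hU₂
  | sUnion S _ ih =>
    obtain ⟨t, htS, hgt⟩ := hg
    obtain ⟨U, hUo, hUx, hU⟩ := ih t htS hgt
    exact ⟨U, hUo, hUx, hU.trans (subset_sUnion_of_mem htS)⟩

/-- `π₁^wh(X, x₀)` is discrete if and only if `X` is semilocally simply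
connected at `x₀`: there is an open neighborhood `U` of `x₀` such that every loop based
at `x₀` with image in `U` is null-homotopic in `X`. -/
theorem whisker_discrete_iff_semilocally_simply_connected (x₀ : X) :
    whiskerTopology x₀ = ⊥ ↔
    ∃ U : Set X, IsOpen U ∧ x₀ ∈ U ∧
      ∀ η : Path x₀ x₀, Set.range ⇑η ⊆ U → η.Homotopic (Path.refl x₀) := by
  constructor
  · intro h
    have hopen : (whiskerTopology x₀).IsOpen {(⟦Path.refl x₀⟧ : Path.Homotopic.Quotient x₀ x₀)} := by
      rw [h]; trivial
    obtain ⟨U, hUo, hUx, hU⟩ := whisker_exists_basic hopen (mem_singleton _)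
    refine ⟨U, hUo, hUx, fun η hη => ?_⟩
    have h1 : (⟦(Path.refl x₀).trans η⟧ : Path.Homotopic.Quotient x₀ x₀) ∈
        whiskerB (⟦Path.refl x₀⟧ : Path.Homotopic.Quotient x₀ x₀) U :=
      by exact ⟨η, hη, Path.Homotopic.Quotient.mk_trans _ _⟩
    have h2 : (⟦(Path.refl x₀).trans η⟧ : Path.Homotopic.Quotient x₀ x₀) = ⟦Path.refl x₀⟧ :=
      mem_singleton_iff.mp (hU h1)
    have h3 : (⟦η⟧ : Path.Homotopic.Quotient x₀ x₀) = ⟦Path.refl x₀⟧ := by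
      rw [← h2]; exact Quotient.sound ⟨(Path.Homotopy.reflTrans η).symm⟩
    exact Quotient.exact h3
  · rintro ⟨U, hUo, hUx, hU⟩
    refine eq_bot_of_singletons_open (t := whiskerTopology x₀) fun g => ?_
    have : ({g} : Set (Path.Homotopic.Quotient x₀ x₀)) = whiskerB g U := by
      apply Subset.antisymm
      · exact singleton_subset_iff.mpr (self_mem_whiskerB g hUx)
      · rintro _ ⟨η, hη, rfl⟩
        have : (⟦η⟧ : Path.Homotopic.Quotient x₀ x₀) = ⟦Path.refl x₀⟧ :=
          Quotient.sound (hU η hη)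
        rw [this, whisker_comp_refl]
        exact mem_singleton g
    rw [this]
    exact TopologicalSpace.GenerateOpen.basic _ ⟨g, U, hUo, hUx, rfl⟩
end
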